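/- Divergence-preserving branching bisimilarity is a congruence for the parallel composition operator of the process calculus: if E is a recursive specification and p1, p2, q1, q2 are process expressions whose names are all defined in E such that T_E(p1) ≈Δb T_E(p2) and T_E(q1) ≈Δb T_E(q2), then T_E([p1 ∥ q1]_{C′}) ≈Δb T_E([p2 ∥ q2]_{C′}) for every C′ ⊆ C. -/

import Mathlib

namespace RTMPaper

/-! ## Labelled transition systems

An `A`-labelled transition system; transition labels are drawn from `Option A`,
where `none` plays the role of the unobservable action τ. -/

structure LTS (A : Type) where
  State : Type
  tr : State → Option A → State → Prop
  init : State
  final : Set State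

namespace LTS

variable {A : Type}

/-- A τ-step. -/
def tauStep (T : LTS A) (s t : T.State) : Prop := T.tr s none t

/-- `⇒` : the reflexive–transitive closure of τ-steps. -/
def tauReach (T : LTS A) : T.State → T.State → Prop :=
  Relation.ReflTransGen T.tauStep

/-- `s —(a)→ t` : either `s —a→ t`, or `a = τ` and `s = t`. -/
def optStep (T : LTS A) (s : T.State) (a : Option A) (t : T.State) : Prop :=
  T.tr s a t ∨ (a = none ∧ s = t)

/-- The set of outgoing transitions of a state. -/
def out (T : LTS A) (s : T.State) : Set (Option A × T.State) :=
  {p | T.tr s p.1 p.2}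

def FinitelyBranching (T : LTS A) : Prop := ∀ s, (T.out s).Finite

/-- The branching degree of `T` is bounded by `B`. -/
def BranchingDegreeBoundedBy (T : LTS A) (B : ℕ) : Prop :=
  ∀ s, (T.out s).Finite ∧ (T.out s).ncard ≤ B

def BoundedlyBranching (T : LTS A) : Prop := ∃ B, T.BranchingDegreeBoundedBy B

/-- A deterministic transition system. -/
def Deterministic (T : LTS A) : Prop :=
  (∀ s a t₁ t₂, T.tr s a t₁ → T.tr s a t₂ → t₁ = t₂) ∧
  (∀ s t, T.tr s none t → ∀ a u, T.tr s a u → a = none)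

/-- Relabelling of an LTS along a map of action alphabets (τ is mapped to τ). -/
def relabel {A' : Type} (f : A → A') (T : LTS A) : LTS A' where
  State := T.State
  tr s a t := ∃ a₀ : Option A, T.tr s a₀ t ∧ a = Option.map f a₀
  init := T.init
  final := T.final

end LTS

/-! ## (Divergence-preserving) branching bisimilarity -/

structure IsBranchingBisimulation {A : Type} (T₁ T₂ : LTS A)
    (R : T₁.State → T₂.State → Prop) : Prop where
  fwd : ∀ s₁ s₂ a s₁', R s₁ s₂ → T₁.tr s₁ a s₁' →
    ∃ s₂'' s₂', T₂.tauReach s₂ s₂'' ∧ T₂.optStep s₂'' a s₂' ∧ R s₁ s₂'' ∧ R s₁' s₂'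
  bwd : ∀ s₁ s₂ a s₂', R s₁ s₂ → T₂.tr s₂ a s₂' →
    ∃ s₁'' s₁', T₁.tauReach s₁ s₁'' ∧ T₁.optStep s₁'' a s₁' ∧ R s₁'' s₂ ∧ R s₁' s₂'
  finFwd : ∀ s₁ s₂, R s₁ s₂ → s₁ ∈ T₁.final →
    ∃ s₂', T₂.tauReach s₂ s₂' ∧ R s₁ s₂' ∧ s₂' ∈ T₂.final
  finBwd : ∀ s₁ s₂, R s₁ s₂ → s₂ ∈ T₂.final →
    ∃ s₁', T₁.tauReach s₁ s₁' ∧ R s₁' s₂ ∧ s₁' ∈ T₁.final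

/-- The divergence-preservation conditions on a branching bisimulation. -/
def DivergencePreserving {A : Type} (T₁ T₂ : LTS A)
    (R : T₁.State → T₂.State → Prop) : Prop :=
  (∀ (s₂ : T₂.State) (f : ℕ → T₁.State),
      (∀ i, T₁.tauStep (f i) (f (i + 1))) → (∀ i, R (f i) s₂) →
      ∃ s₂', Relation.TransGen T₂.tauStep s₂ s₂' ∧ ∃ i, R (f i) s₂') ∧
  (∀ (s₁ : T₁.State) (f : ℕ → T₂.State),
      (∀ i, T₂.tauStep (f i) (f (i + 1))) → (∀ i, R s₁ (f i)) →
      ∃ s₁', Relation.TransGen T₁.tauStep s₁ s₁' ∧ ∃ i, R s₁' (f i))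

/-- `T₁ ≈b T₂` : branching bisimilarity. -/
def BranchingBisimilar {A : Type} (T₁ T₂ : LTS A) : Prop :=
  ∃ R, IsBranchingBisimulation T₁ T₂ R ∧ R T₁.init T₂.init

/-- `T₁ ≈Δb T₂` : divergence-preserving branching bisimilarity. -/
def DPBranchingBisimilar {A : Type} (T₁ T₂ : LTS A) : Prop :=
  ∃ R, IsBranchingBisimulation T₁ T₂ R ∧ DivergencePreserving T₁ T₂ R ∧
    R T₁.init T₂.init

/-! ## Effective and computable transition systems -/

/-- A set of natural numbers is recursively enumerable. -/
def REset (X : Set ℕ) : Prop :=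
  ∃ f : ℕ →. Unit, Partrec f ∧ ∀ n, (f n).Dom ↔ n ∈ X

/-- A (finitely branching) LTS is computable if, with respect to some injective
codings of its labels and states into ℕ, the functions `out` and `fin` are
recursive. -/
def LTS.IsComputable {A : Type} (T : LTS A) : Prop :=
  ∃ hfb : ∀ s, (T.out s).Finite,
    ∃ (cL : Option A → ℕ) (cS : T.State → ℕ),
      Function.Injective cL ∧ Function.Injective cS ∧
      (∃ fo : ℕ → ℕ, Computable fo ∧ ∀ s,
        fo (cS s) =
          Encodable.encode
            (((hfb s).toFinset).image fun p => Nat.pair (cL p.1) (cS p.2))) ∧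
      (∃ ff : ℕ → ℕ, Computable ff ∧ ∀ s,
        (s ∈ T.final → ff (cS s) = 1) ∧ (s ∉ T.final → ff (cS s) = 0))

/-- A (finitely branching) LTS is effective if, with respect to some injective
codings of its labels and states into ℕ, its transition relation and its set of
final states are recursively enumerable. -/
def LTS.IsEffective {A : Type} (T : LTS A) : Prop :=
  T.FinitelyBranching ∧
  ∃ (cL : Option A → ℕ) (cS : T.State → ℕ),
    Function.Injective cL ∧ Function.Injective cS ∧
    REset {n | ∃ s a t, T.tr s a t ∧ n = Nat.pair (cS s) (Nat.pair (cL a) (cS t))} ∧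
    REset {n | ∃ s ∈ T.final, n = cS s}

/-! ## Reactive Turing machines -/

inductive Move : Type
  | L | R
deriving DecidableEq

instance : Fintype Move where
  elems := {Move.L, Move.R}
  complete := by intro x; cases x <;> simp

/-- A tape instance: the content left of the head (nearest symbol first), the
symbol under the head, and the content right of the head (nearest symbol
first).  Tape symbols are `Option D`, with `none` the blank symbol □. -/
structure Tape (D : Type) where
  left : List (Option D)
  head : Option D
  right : List (Option D)

def Tape.empty (D : Type) : Tape D := ⟨[], none, []⟩

/-- Write `e` at the head position and move the head in direction `m`. -/
def Tape.writeMove {D : Type} (t : Tape D) (e : Option D) : Move → Tape D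
  | .L =>
    match t.left with
    | [] => ⟨[], none, e :: t.right⟩
    | x :: l => ⟨l, x, e :: t.right⟩
  | .R =>
    match t.right with
    | [] => ⟨e :: t.left, none, []⟩
    | x :: r => ⟨e :: t.left, x, r⟩

/-- A reactive Turing machine with action symbols `A` (labels `Option A`,
`none` being τ) and data symbols `D` (tape symbols `Option D`, `none` being
the blank symbol). -/
structure RTM (A D : Type) where
  Q : Type
  [instQ : Fintype Q]
  trans : Q → Option D → Option A → Option D → Move → Q → Prop
  init : Q
  final : Set Q

attribute [instance] RTM.instQ

/-- The transition system `T(M)` associated with an RTM `M`. -/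
def RTM.lts {A D : Type} (M : RTM A D) : LTS A where
  State := M.Q × Tape D
  tr c a c' := ∃ e m, M.trans c.1 c.2.head a e m c'.1 ∧ c'.2 = c.2.writeMove e m
  init := (M.init, Tape.empty D)
  final := {c | c.1 ∈ M.final}

def RTM.Deterministic {A D : Type} (M : RTM A D) : Prop :=
  (∀ s d a e₁ m₁ t₁ e₂ m₂ t₂, M.trans s d a e₁ m₁ t₁ → M.trans s d a e₂ m₂ t₂ →
      e₁ = e₂ ∧ m₁ = m₂ ∧ t₁ = t₂) ∧
  (∀ s d e₁ m₁ t₁, M.trans s d none e₁ m₁ t₁ →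
      ∀ a e₂ m₂ t₂, M.trans s d a e₂ m₂ t₂ → a = none)

/-! ## Actions over channels, and parallel composition -/

/-- Actions over a set `C` of channels with communicated values in `V`,
together with further (base) actions from `B`:  `recv c v` is `c?v`,
`send c v` is `c!v`. -/
inductive CAct (C V B : Type) : Type
  | recv : C → V → CAct C V B
  | send : C → V → CAct C V B
  | base : B → CAct C V B
deriving DecidableEq

/-- The (possibly silent) action `a` is a communication action on one of the
channels in `C'`. -/
def IsComm {C V B : Type} (C' : Set C) : Option (CAct C V B) → Prop
  | some (.recv c _) => c ∈ C'
  | some (.send c _) => c ∈ C'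
  | _ => False

/-- Parallel composition `[T₁ ∥ T₂]_{C'}` of transition systems, enforcing
communication on the channels in `C'`. -/
def parLTS {C V B : Type} (C' : Set C) (T₁ T₂ : LTS (CAct C V B)) :
    LTS (CAct C V B) where
  State := T₁.State × T₂.State
  init := (T₁.init, T₂.init)
  final := {p | p.1 ∈ T₁.final ∧ p.2 ∈ T₂.final}
  tr p a p' :=
    ¬ IsComm C' a ∧
    ((T₁.tr p.1 a p'.1 ∧ p.2 = p'.2) ∨
     (T₂.tr p.2 a p'.2 ∧ p.1 = p'.1) ∨
     (a = none ∧ ∃ c ∈ C', ∃ d : V,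
        (T₁.tr p.1 (some (.send c d)) p'.1 ∧ T₂.tr p.2 (some (.recv c d)) p'.2) ∨
        (T₁.tr p.1 (some (.recv c d)) p'.1 ∧ T₂.tr p.2 (some (.send c d)) p'.2)))

/-- The behaviour of `sender(M)`: output the symbols of `w` one by one along
channel `cu`, then halt in a final state. -/
def outputLTS {C V B : Type} (cu : C) (w : List V) : LTS (CAct C V B) where
  State := List V
  tr s a t := ∃ d, s = d :: t ∧ a = some (.send cu d)
  init := w
  final := {([] : List V)}

/-- A concrete (syntactic, Gödel-numberable) presentation of a reactive Turing
machine: states are `Fin (n+1)`, and the transition relation is a finite set of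
tuples. -/
structure RTMc (A D : Type) where
  n : ℕ
  trans : Finset (Fin (n + 1) × Option D × Option A × Option D × Move × Fin (n + 1))
  init : Fin (n + 1)
  final : Finset (Fin (n + 1))

def RTMc.toRTM {A D : Type} (M : RTMc A D) : RTM A D where
  Q := Fin (M.n + 1)
  trans s d a e m t := (s, d, a, e, m, t) ∈ M.trans
  init := M.init
  final := (↑M.final : Set (Fin (M.n + 1)))

end RTMPaper

namespace RTMPaper

/-! ## A process calculus (TCP_τ without sequential composition) -/

/-- Process expressions: deadlock `0`, skip `1`, action prefix, alternative
composition, parallel composition (enforcing communication on a set of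
channels), and names. -/
inductive PExp (C V B N : Type) : Type
  | dl : PExp C V B N
  | emp : PExp C V B N
  | pref : Option (CAct C V B) → PExp C V B N → PExp C V B N
  | alt : PExp C V B N → PExp C V B N → PExp C V B N
  | par : Set C → PExp C V B N → PExp C V B N → PExp C V B N
  | name : N → PExp C V B N

namespace PExp

def names {C V B N : Type} : PExp C V B N → Set N
  | .dl => ∅
  | .emp => ∅
  | .pref _ p => p.names
  | .alt p q => p.names ∪ q.names
  | .par _ p q => p.names ∪ q.names
  | .name n => {n}

def mapNames {C V B N N' : Type} (f : N → N') : PExp C V B N → PExp C V B N'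
  | .dl => .dl
  | .emp => .emp
  | .pref a p => .pref a (p.mapNames f)
  | .alt p q => .alt (p.mapNames f) (q.mapNames f)
  | .par C' p q => .par C' (p.mapNames f) (q.mapNames f)
  | .name n => .name (f n)

end PExp

/-- A recursive specification over the names `N` is a partial map from names to
process expressions (the defining equations). -/
def SpecWF {C V B N : Type} (E : N → Option (PExp C V B N)) : Prop :=
  ∀ n p, E n = some p → ∀ m ∈ PExp.names p, (E m).isSome

/-- All names occurring in `p` have a defining equation in `E`. -/
def DefinedIn {C V B N : Type} (E : N → Option (PExp C V B N))
    (p : PExp C V B N) : Prop :=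
  ∀ m ∈ PExp.names p, (E m).isSome

/-- The termination predicate `↓` of the structural operational semantics. -/
inductive Term {C V B N : Type} (E : N → Option (PExp C V B N)) :
    PExp C V B N → Prop
  | emp : Term E .emp
  | altL {p q} : Term E p → Term E (.alt p q)
  | altR {p q} : Term E q → Term E (.alt p q)
  | par {C' p q} : Term E p → Term E q → Term E (.par C' p q)
  | name {n p} : E n = some p → Term E p → Term E (.name n)

/-- The transition relation of the structural operational semantics. -/
inductive Step {C V B N : Type} (E : N → Option (PExp C V B N)) :
    PExp C V B N → Option (CAct C V B) → PExp C V B N → Prop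
  | pref {a p} : Step E (.pref a p) a p
  | altL {p q a p'} : Step E p a p' → Step E (.alt p q) a p'
  | altR {p q a q'} : Step E q a q' → Step E (.alt p q) a q'
  | parL {C' p q a p'} : Step E p a p' → ¬ IsComm C' a →
      Step E (.par C' p q) a (.par C' p' q)
  | parR {C' p q a q'} : Step E q a q' → ¬ IsComm C' a →
      Step E (.par C' p q) a (.par C' p q')
  | syncSR {C' : Set C} {p q p' q' c d} : c ∈ C' →
      Step E p (some (.send c d)) p' → Step E q (some (.recv c d)) q' →
      Step E (.par C' p q) none (.par C' p' q')
  | syncRS {C' : Set C} {p q p' q' c d} : c ∈ C' →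
      Step E p (some (.recv c d)) p' → Step E q (some (.send c d)) q' →
      Step E (.par C' p q) none (.par C' p' q')
  | name {n p a p'} : E n = some p → Step E p a p' → Step E (.name n) a p'

/-- The process expressions reachable from `p` under the semantics of `E`. -/
def Reach {C V B N : Type} (E : N → Option (PExp C V B N))
    (p : PExp C V B N) : Set (PExp C V B N) :=
  {q | Relation.ReflTransGen (fun x y => ∃ a, Step E x a y) p q}

/-- The transition system `T_E(p)` associated with the process expression `p`
and the recursive specification `E`. -/
def pLTS {C V B N : Type} (E : N → Option (PExp C V B N))
    (p : PExp C V B N) : LTS (CAct C V B) where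
  State := {q // q ∈ Reach E p}
  tr s a t := Step E s.1 a t.1
  init := ⟨p, Relation.ReflTransGen.refl⟩
  final := {s | Term E s.1}

/-- A deterministic internal computation from `s` to `s'` with respect to a
transition relation `tr`. -/
def DetInternalComp {S A : Type} (tr : S → Option A → S → Prop)
    (s s' : S) : Prop :=
  ∃ (n : ℕ) (f : ℕ → S), f 0 = s ∧ f n = s' ∧
    (∀ i < n, tr (f i) none (f (i + 1))) ∧
    (∀ i < n, ∀ a u, tr (f i) a u → a = none ∧ u = f (i + 1))

/-! ### Finite sums of process expressions -/

def bigAlt {C V B N : Type} (l : List (PExp C V B N)) : PExp C V B N :=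
  l.foldr PExp.alt PExp.dl

/-- `Σ_{x ∈ l} f x`. -/
def sumList {C V B N ι : Type} (l : List ι) (f : ι → PExp C V B N) :
    PExp C V B N :=
  bigAlt (l.map f)

/-- The list of all elements of a finite type. -/
noncomputable def allOf (ι : Type) [Fintype ι] : List ι := Finset.univ.toList

/-- The disjoint union of two recursive specifications. -/
def combineSpec {C V B N₁ N₂ : Type}
    (E₁ : N₁ → Option (PExp C V B N₁)) (E₂ : N₂ → Option (PExp C V B N₂)) :
    N₁ ⊕ N₂ → Option (PExp C V B (N₁ ⊕ N₂))
  | .inl n => (E₁ n).map (PExp.mapNames Sum.inl)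
  | .inr n => (E₂ n).map (PExp.mapNames Sum.inr)

/-! ### Queue specifications -/

/-- The infinite specification `E∞Q` of a FIFO queue over the alphabet `al`
with input channel `ci` and output channel `co`; the name of a state of the
queue is its contents (a string, insertion at the left, removal at the
right). -/
def infQueueSpec (C B V : Type) (al : List V) (ci co : C) :
    List V → Option (PExp C V B (List V)) := fun l =>
  some <|
    match l.getLast? with
    | none =>
        .alt (sumList al fun d => .pref (some (.recv ci d)) (.name [d])) .emp
    | some d =>
        .alt (.alt (.pref (some (.send co d)) (.name l.dropLast))
          (sumList al fun e => .pref (some (.recv ci e)) (.name (e :: l)))) .emp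

/-- The finite Bergstra–Klop queue specification `EQ` (with added `1`-summands):
for channels `(j,k,p)`,
`Q^{jk}_p ≝ Σ_d j?d.[ Q^{jp}_k ∥ (1 + k!d.Q^{pk}_j) ]_{{p}} + 1`. -/
def bkQueueSpec (C B V : Type) (al : List V) :
    C × C × C → Option (PExp C V B (C × C × C)) := fun jkp =>
  some <| .alt
    (sumList al fun d => .pref (some (.recv jkp.1 d))
      (.par {jkp.2.2} (.name (jkp.1, jkp.2.2, jkp.2.1))
        (.alt .emp (.pref (some (.send jkp.2.1 d)) (.name (jkp.2.2, jkp.2.1, jkp.1))))))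
    .emp

/-! ### Tape specifications -/

/-- Symbols communicated in the tape/queue specifications: tape symbols
(`dat d` for `d ∈ D□`), the fresh symbols `⊥` and `$`, and the move
instructions `L` and `R`. -/
inductive Sym (D : Type) : Type
  | dat : Option D → Sym D
  | bot : Sym D
  | dollar : Sym D
  | mvL : Sym D
  | mvR : Sym D
deriving DecidableEq

instance {D : Type} [Fintype D] [DecidableEq D] : Fintype (Sym D) where
  elems := ((Finset.univ : Finset (Option D)).image Sym.dat) ∪
    {Sym.bot, Sym.dollar, Sym.mvL, Sym.mvR}
  complete := by intro x; cases x <;> simp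

/-- The queue alphabet `D□ ∪ {⊥, $}`. -/
noncomputable def qAlphList (D : Type) [Fintype D] [DecidableEq D] : List (Sym D) :=
  ((Finset.univ : Finset (Sym D)).filter fun v => v ≠ Sym.mvL ∧ v ≠ Sym.mvR).toList

def dmap {D : Type} (l : List (Option D)) : List (Sym D) := l.map Sym.dat

def movSym {D : Type} : Move → Sym D
  | .L => .mvL
  | .R => .mvR

/-- Names of the finite tape-controller specification `ET`. -/
inductive TName (D : Type) : Type
  | H : Option D → TName D
  | HL : Option D → TName D
  | HR : Option D → TName D
  | Back : TName D
  | Fwd : Option D → TName D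
  | FwdBot : TName D

/-- The finite tape-controller specification `ET`, with read channel `cr`,
write channel `cw`, move channel `cm`, and a queue interface on channels
`ci` (insert) and `co` (remove). -/
noncomputable def tapeCtrlSpec (C D B : Type) [Fintype D] (ci co cr cw cm : C) :
    TName D → Option (PExp C (Sym D) B (TName D))
  | .H d => some <| .alt (.alt (.alt (.alt
      (.pref (some (.send cr (.dat d))) (.name (.H d)))
      (sumList (allOf (Option D)) fun e =>
        .pref (some (.recv cw (.dat e))) (.name (.H e))))
      (.pref (some (.recv cm .mvL)) (.name (.HL d))))
      (.pref (some (.recv cm .mvR)) (.name (.HR d))))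
      .emp
  | .HL d => some <| .pref (some (.send ci (.dat d)))
      (.alt (sumList (allOf (Option D)) fun e =>
          .pref (some (.recv co (.dat e))) (.name (.H e)))
        (.pref (some (.recv co .bot))
          (.pref (some (.send ci .dollar))
            (.pref (some (.send ci .bot)) (.name .Back)))))
  | .Back => some <| .alt
      (sumList (allOf (Option D)) fun d =>
        .pref (some (.recv co (.dat d)))
          (.pref (some (.send ci (.dat d))) (.name .Back)))
      (.pref (some (.recv co .dollar)) (.name (.H none)))
  | .HR d => some <| .pref (some (.send ci .dollar))
      (.pref (some (.send ci (.dat d)))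
        (.alt (sumList (allOf (Option D)) fun e =>
            .pref (some (.recv co (.dat e))) (.name (.Fwd e)))
          (.pref (some (.recv co .bot)) (.name .FwdBot))))
  | .Fwd d => some <| .alt (.alt
      (sumList (allOf (Option D)) fun e =>
        .pref (some (.recv co (.dat e)))
          (.pref (some (.send ci (.dat d))) (.name (.Fwd e))))
      (.pref (some (.recv co .bot))
        (.pref (some (.send ci (.dat d))) (.name .FwdBot))))
      (.pref (some (.recv co .dollar)) (.name (.H d)))
  | .FwdBot => some <| .alt
      (sumList (allOf (Option D)) fun e =>
        .pref (some (.recv co (.dat e)))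
          (.pref (some (.send ci .bot)) (.name (.Fwd e))))
      (.pref (some (.recv co .dollar))
        (.pref (some (.send ci .bot)) (.name (.H none))))

/-- The infinite tape specification `E∞T`: one name for every tape instance,
with read channel `cr`, write channel `cw` and move channel `cm`. -/
noncomputable def infTapeSpec (C B D : Type) [Fintype D] (cr cw cm : C) :
    Tape D → Option (PExp C (Sym D) B (Tape D)) := fun t =>
  some <| .alt (.alt (.alt (.alt
    (.pref (some (.send cr (.dat t.head))) (.name t))
    (sumList (allOf (Option D)) fun e =>
      .pref (some (.recv cw (.dat e))) (.name ⟨t.left, e, t.right⟩)))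
    (.pref (some (.recv cm .mvL)) (.name (t.writeMove t.head .L))))
    (.pref (some (.recv cm .mvR)) (.name (t.writeMove t.head .R))))
    .emp

/-- The finite-control specification `Efc` of an RTM `M`:
`C_{s,d} ≝ Σ_{(s,d,a,e,Mv,t) ∈ →} a.w!e.m!Mv.Σ_{f∈D□} r?f.C_{t,f}`,
with an additional summand `1` iff `s` is a final state of `M`. -/
noncomputable def fcSpec {C D B : Type} [Fintype D] [Fintype B]
    (M : RTM B D) (cr cw cm : C) :
    M.Q × Option D → Option (PExp C (Sym D) B (M.Q × Option D)) := fun sd =>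
  let base : PExp C (Sym D) B (M.Q × Option D) :=
    bigAlt ((((Set.toFinite {x : Option B × Option D × Move × M.Q |
        M.trans sd.1 sd.2 x.1 x.2.1 x.2.2.1 x.2.2.2}).toFinset).toList).map fun x =>
      .pref (Option.map CAct.base x.1)
        (.pref (some (.send cw (.dat x.2.1)))
          (.pref (some (.send cm (movSym x.2.2.1)))
            (sumList (allOf (Option D)) fun f =>
              .pref (some (.recv cr (.dat f))) (.name (x.2.2.2, f))))))
  haveI := Classical.propDecidable (sd.1 ∈ M.final)
  some (if sd.1 ∈ M.final then .alt base .emp else base)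

end RTMPaper

namespace RTMPaper

section ParCongruence

variable {C V B N : Type} {E : N → Option (PExp C V B N)}

lemma mem_reach_step {p s t : PExp C V B N} {a} (hs : s ∈ Reach E p)
    (h : Step E s a t) : t ∈ Reach E p :=
  Relation.ReflTransGen.tail hs ⟨a, h⟩

lemma isComm_none {C' : Set C} : ¬ IsComm (V := V) (B := B) C' none := fun h => h

lemma step_par_inv {C' : Set C} {p q r : PExp C V B N} {a}
    (h : Step E (.par C' p q) a r) :
    ∃ p' q', r = .par C' p' q' ∧
      ((Step E p a p' ∧ q' = q ∧ ¬ IsComm C' a) ∨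
       (Step E q a q' ∧ p' = p ∧ ¬ IsComm C' a) ∨
       (a = none ∧ ∃ c ∈ C', ∃ d : V,
         (Step E p (some (.send c d)) p' ∧ Step E q (some (.recv c d)) q') ∨
         (Step E p (some (.recv c d)) p' ∧ Step E q (some (.send c d)) q'))) := by
  cases h with
  | parL h hc => exact ⟨_, _, rfl, .inl ⟨h, rfl, hc⟩⟩
  | parR h hc => exact ⟨_, _, rfl, .inr (.inl ⟨h, rfl, hc⟩)⟩
  | syncSR hc h1 h2 => exact ⟨_, _, rfl, .inr (.inr ⟨rfl, _, hc, _, .inl ⟨h1, h2⟩⟩)⟩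
  | syncRS hc h1 h2 => exact ⟨_, _, rfl, .inr (.inr ⟨rfl, _, hc, _, .inr ⟨h1, h2⟩⟩)⟩

lemma reach_par_inv {C' : Set C} {p q r : PExp C V B N}
    (h : r ∈ Reach E (.par C' p q)) :
    ∃ p' q', r = .par C' p' q' ∧ p' ∈ Reach E p ∧ q' ∈ Reach E q := by
  induction h with
  | refl => exact ⟨p, q, rfl, .refl, .refl⟩
  | tail _ h ih =>
    obtain ⟨a, hstep⟩ := h
    obtain ⟨p', q', rfl, hp', hq'⟩ := ih
    obtain ⟨p'', q'', rfl, hcase⟩ := step_par_inv hstep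
    rcases hcase with ⟨h1, rfl, -⟩ | ⟨h1, rfl, -⟩ |
      ⟨-, c, -, d, ⟨h1, h2⟩ | ⟨h1, h2⟩⟩
    exacts [⟨_, _, rfl, hp'.tail ⟨_, h1⟩, hq'⟩,
      ⟨_, _, rfl, hp', hq'.tail ⟨_, h1⟩⟩,
      ⟨_, _, rfl, hp'.tail ⟨_, h1⟩, hq'.tail ⟨_, h2⟩⟩,
      ⟨_, _, rfl, hp'.tail ⟨_, h1⟩, hq'.tail ⟨_, h2⟩⟩]

lemma term_par_inv {C' : Set C} {p q : PExp C V B N}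
    (h : Term E (.par C' p q)) : Term E p ∧ Term E q := by
  cases h with
  | par h1 h2 => exact ⟨h1, h2⟩

/-- expression-level τ-chain lifted through the left of a parallel composition -/
lemma tauChainL {C' : Set C} {p p' : PExp C V B N} (q : PExp C V B N)
    (h : Relation.ReflTransGen (fun x y => Step E x none y) p p') :
    Relation.ReflTransGen (fun x y => Step E x none y)
      (.par C' p q) (.par C' p' q) :=
  Relation.ReflTransGen.lift (p := fun x y => Step E x none y) (fun x => PExp.par C' x q)
    (fun _ _ h => Step.parL h isComm_none) _ _ h

lemma tauChainR {C' : Set C} {q q' : PExp C V B N} (p : PExp C V B N)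
    (h : Relation.ReflTransGen (fun x y => Step E x none y) q q') :
    Relation.ReflTransGen (fun x y => Step E x none y)
      (.par C' p q) (.par C' p q') :=
  Relation.ReflTransGen.lift (p := fun x y => Step E x none y) (fun x => PExp.par C' p x)
    (fun _ _ h => Step.parR h isComm_none) _ _ h

lemma tauTransL {C' : Set C} {p p' : PExp C V B N} (q : PExp C V B N)
    (h : Relation.TransGen (fun x y => Step E x none y) p p') :
    Relation.TransGen (fun x y => Step E x none y)
      (.par C' p q) (.par C' p' q) :=
  Relation.TransGen.lift (p := fun x y => Step E x none y) (fun x => PExp.par C' x q)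
    (fun _ _ h => Step.parL h isComm_none) _ _ h

lemma tauTransR {C' : Set C} {q q' : PExp C V B N} (p : PExp C V B N)
    (h : Relation.TransGen (fun x y => Step E x none y) q q') :
    Relation.TransGen (fun x y => Step E x none y)
      (.par C' p q) (.par C' p q') :=
  Relation.TransGen.lift (p := fun x y => Step E x none y) (fun x => PExp.par C' p x)
    (fun _ _ h => Step.parR h isComm_none) _ _ h

/-- project a τ-reach in `pLTS` to the expression level -/
lemma tauReach_down {p : PExp C V B N} {s t : (pLTS E p).State}
    (h : (pLTS E p).tauReach s t) :
    Relation.ReflTransGen (fun x y => Step E x none y) s.1 t.1 :=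
  Relation.ReflTransGen.lift (p := fun x y => Step E x none y) Subtype.val (fun _ _ h => h) _ _ h

lemma tauTrans_down {p : PExp C V B N} {s t : (pLTS E p).State}
    (h : Relation.TransGen (pLTS E p).tauStep s t) :
    Relation.TransGen (fun x y => Step E x none y) s.1 t.1 :=
  Relation.TransGen.lift (p := fun x y => Step E x none y) Subtype.val (fun _ _ h => h) _ _ h

/-- lift an expression-level τ-chain starting at a reachable expression to
a τ-reach in `pLTS` -/
lemma reach_lift {p s t : PExp C V B N} (hs : s ∈ Reach E p)
    (h : Relation.ReflTransGen (fun x y => Step E x none y) s t) :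
    ∃ ht : t ∈ Reach E p, (pLTS E p).tauReach ⟨s, hs⟩ ⟨t, ht⟩ := by
  induction h with
  | refl => exact ⟨hs, .refl⟩
  | tail _ h2 ih =>
    obtain ⟨hm, hr⟩ := ih
    exact ⟨mem_reach_step hm h2, Relation.ReflTransGen.tail hr h2⟩

lemma reach_lift_trans {p s t : PExp C V B N} (hs : s ∈ Reach E p)
    (h : Relation.TransGen (fun x y => Step E x none y) s t) :
    ∃ ht : t ∈ Reach E p, Relation.TransGen (pLTS E p).tauStep ⟨s, hs⟩ ⟨t, ht⟩ := by
  induction h with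
  | single h2 => exact ⟨mem_reach_step hs h2, Relation.TransGen.single h2⟩
  | tail _ h2 ih =>
    obtain ⟨hm, hr⟩ := ih
    exact ⟨mem_reach_step hm h2, Relation.TransGen.tail hr h2⟩

/-- the product of two relations on the state spaces of `pLTS`s, as a relation
on the state spaces of the `pLTS`s of the parallel compositions. -/
def parRel (E : N → Option (PExp C V B N)) (C' : Set C) (p₁ q₁ p₂ q₂ : PExp C V B N)
    (Rp : (pLTS E p₁).State → (pLTS E p₂).State → Prop)
    (Rq : (pLTS E q₁).State → (pLTS E q₂).State → Prop) :
    (pLTS E (.par C' p₁ q₁)).State → (pLTS E (.par C' p₂ q₂)).State → Prop :=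
  fun s t => ∃ (a b c d : PExp C V B N) (ha : a ∈ Reach E p₁) (hb : b ∈ Reach E q₁)
    (hc : c ∈ Reach E p₂) (hd : d ∈ Reach E q₂),
      s.1 = .par C' a b ∧ t.1 = .par C' c d ∧ Rp ⟨a, ha⟩ ⟨c, hc⟩ ∧ Rq ⟨b, hb⟩ ⟨d, hd⟩

lemma parRel_flip {C' : Set C} {p₁ q₁ p₂ q₂ : PExp C V B N}
    {Rp : (pLTS E p₁).State → (pLTS E p₂).State → Prop}
    {Rq : (pLTS E q₁).State → (pLTS E q₂).State → Prop}
    {s : (pLTS E (.par C' p₁ q₁)).State} {t : (pLTS E (.par C' p₂ q₂)).State} :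
    parRel E C' p₂ q₂ p₁ q₁ (fun x y => Rp y x) (fun x y => Rq y x) t s ↔
      parRel E C' p₁ q₁ p₂ q₂ Rp Rq s t := by
  constructor
  · rintro ⟨a, b, c, d, ha, hb, hc, hd, h1, h2, h3, h4⟩
    exact ⟨c, d, a, b, hc, hd, ha, hb, h2, h1, h3, h4⟩
  · rintro ⟨a, b, c, d, ha, hb, hc, hd, h1, h2, h3, h4⟩
    exact ⟨c, d, a, b, hc, hd, ha, hb, h2, h1, h3, h4⟩

/-- forward simulation condition for the product relation -/
lemma parRel_fwd {C' : Set C} {p₁ q₁ p₂ q₂ : PExp C V B N}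
    {Rp : (pLTS E p₁).State → (pLTS E p₂).State → Prop}
    {Rq : (pLTS E q₁).State → (pLTS E q₂).State → Prop}
    (hp : ∀ s₁ s₂ a s₁', Rp s₁ s₂ → (pLTS E p₁).tr s₁ a s₁' →
      ∃ s₂'' s₂', (pLTS E p₂).tauReach s₂ s₂'' ∧ (pLTS E p₂).optStep s₂'' a s₂' ∧
        Rp s₁ s₂'' ∧ Rp s₁' s₂')
    (hq : ∀ s₁ s₂ a s₁', Rq s₁ s₂ → (pLTS E q₁).tr s₁ a s₁' →
      ∃ s₂'' s₂', (pLTS E q₂).tauReach s₂ s₂'' ∧ (pLTS E q₂).optStep s₂'' a s₂' ∧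
        Rq s₁ s₂'' ∧ Rq s₁' s₂') :
    ∀ s₁ s₂ a s₁', parRel E C' p₁ q₁ p₂ q₂ Rp Rq s₁ s₂ →
      (pLTS E (.par C' p₁ q₁)).tr s₁ a s₁' →
      ∃ s₂'' s₂', (pLTS E (.par C' p₂ q₂)).tauReach s₂ s₂'' ∧
        (pLTS E (.par C' p₂ q₂)).optStep s₂'' a s₂' ∧
        parRel E C' p₁ q₁ p₂ q₂ Rp Rq s₁ s₂'' ∧
        parRel E C' p₁ q₁ p₂ q₂ Rp Rq s₁' s₂' := by
  rintro ⟨s1v, hs1m⟩ ⟨s2v, hs2m⟩ α ⟨s1v', hs1m'⟩ hR hstep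
  obtain ⟨a, b, c, d, ha, hb, hc, hd, hs1, hs2, hRa, hRb⟩ := hR
  dsimp only at hs1 hs2 hstep ⊢
  subst hs1; subst hs2
  obtain ⟨a', b', he, hcase⟩ := step_par_inv hstep
  subst he
  rcases hcase with ⟨h1, rfl, hcomm⟩ | ⟨h1, rfl, hcomm⟩ |
    ⟨rfl, ch, hch, v, ⟨h1, h2⟩ | ⟨h1, h2⟩⟩
  · -- left component moves
    have ha' := mem_reach_step ha h1
    obtain ⟨c'', c', hreach, hopt, hR1, hR2⟩ := hp ⟨a, ha⟩ ⟨c, hc⟩ α ⟨a', ha'⟩ hRa h1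
    obtain ⟨hm'', hr⟩ := reach_lift hs2m (tauChainL (C' := C') d (tauReach_down hreach))
    rcases hopt with hstep' | ⟨rfl, rfl⟩
    · have hstepPar : Step E (.par C' c''.1 d) α (.par C' c'.1 d) :=
        Step.parL hstep' hcomm
      refine ⟨⟨.par C' c''.1 d, hm''⟩, ⟨.par C' c'.1 d, mem_reach_step hm'' hstepPar⟩,
        hr, .inl hstepPar,
        ⟨a, b', c''.1, d, ha, hb, c''.2, hd, rfl, rfl, hR1, hRb⟩,
        ⟨a', b', c'.1, d, ha', hb, c'.2, hd, rfl, rfl, hR2, hRb⟩⟩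
    · exact ⟨⟨.par C' c''.1 d, hm''⟩, ⟨.par C' c''.1 d, hm''⟩, hr, .inr ⟨rfl, rfl⟩,
        ⟨a, b', c''.1, d, ha, hb, c''.2, hd, rfl, rfl, hR1, hRb⟩,
        ⟨a', b', c''.1, d, ha', hb, c''.2, hd, rfl, rfl, hR2, hRb⟩⟩
  · -- right component moves
    have hb' := mem_reach_step hb h1
    obtain ⟨d'', d', hreach, hopt, hR1, hR2⟩ := hq ⟨b, hb⟩ ⟨d, hd⟩ α ⟨b', hb'⟩ hRb h1
    obtain ⟨hm'', hr⟩ := reach_lift hs2m (tauChainR (C' := C') c (tauReach_down hreach))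
    rcases hopt with hstep' | ⟨rfl, rfl⟩
    · have hstepPar : Step E (.par C' c d''.1) α (.par C' c d'.1) :=
        Step.parR hstep' hcomm
      refine ⟨⟨.par C' c d''.1, hm''⟩, ⟨.par C' c d'.1, mem_reach_step hm'' hstepPar⟩,
        hr, .inl hstepPar,
        ⟨a', b, c, d''.1, ha, hb, hc, d''.2, rfl, rfl, hRa, hR1⟩,
        ⟨a', b', c, d'.1, ha, hb', hc, d'.2, rfl, rfl, hRa, hR2⟩⟩
    · exact ⟨⟨.par C' c d''.1, hm''⟩, ⟨.par C' c d''.1, hm''⟩, hr, .inr ⟨rfl, rfl⟩,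
        ⟨a', b, c, d''.1, ha, hb, hc, d''.2, rfl, rfl, hRa, hR1⟩,
        ⟨a', b', c, d''.1, ha, hb', hc, d''.2, rfl, rfl, hRa, hR2⟩⟩
  · -- synchronisation: left sends, right receives
    have ha' := mem_reach_step ha h1
    have hb' := mem_reach_step hb h2
    obtain ⟨c'', c', hre1, hopt1, hp1, hp2⟩ :=
      hp ⟨a, ha⟩ ⟨c, hc⟩ (some (.send ch v)) ⟨a', ha'⟩ hRa h1
    obtain ⟨d'', d', hre2, hopt2, hq1, hq2⟩ :=
      hq ⟨b, hb⟩ ⟨d, hd⟩ (some (.recv ch v)) ⟨b', hb'⟩ hRb h2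
    rcases hopt1 with h1' | ⟨h, -⟩; swap; · exact absurd h (Option.some_ne_none _)
    rcases hopt2 with h2' | ⟨h, -⟩; swap; · exact absurd h (Option.some_ne_none _)
    obtain ⟨hm'', hr⟩ := reach_lift hs2m
      ((tauChainL (C' := C') d (tauReach_down hre1)).trans
        (tauChainR (C' := C') c''.1 (tauReach_down hre2)))
    have hstepPar : Step E (.par C' c''.1 d''.1) none (.par C' c'.1 d'.1) :=
      Step.syncSR hch h1' h2'
    exact ⟨⟨.par C' c''.1 d''.1, hm''⟩,
      ⟨.par C' c'.1 d'.1, mem_reach_step hm'' hstepPar⟩, hr, .inl hstepPar,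
      ⟨a, b, c''.1, d''.1, ha, hb, c''.2, d''.2, rfl, rfl, hp1, hq1⟩,
      ⟨a', b', c'.1, d'.1, ha', hb', c'.2, d'.2, rfl, rfl, hp2, hq2⟩⟩
  · -- synchronisation: left receives, right sends
    have ha' := mem_reach_step ha h1
    have hb' := mem_reach_step hb h2
    obtain ⟨c'', c', hre1, hopt1, hp1, hp2⟩ :=
      hp ⟨a, ha⟩ ⟨c, hc⟩ (some (.recv ch v)) ⟨a', ha'⟩ hRa h1
    obtain ⟨d'', d', hre2, hopt2, hq1, hq2⟩ :=
      hq ⟨b, hb⟩ ⟨d, hd⟩ (some (.send ch v)) ⟨b', hb'⟩ hRb h2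
    rcases hopt1 with h1' | ⟨h, -⟩; swap; · exact absurd h (Option.some_ne_none _)
    rcases hopt2 with h2' | ⟨h, -⟩; swap; · exact absurd h (Option.some_ne_none _)
    obtain ⟨hm'', hr⟩ := reach_lift hs2m
      ((tauChainL (C' := C') d (tauReach_down hre1)).trans
        (tauChainR (C' := C') c''.1 (tauReach_down hre2)))
    have hstepPar : Step E (.par C' c''.1 d''.1) none (.par C' c'.1 d'.1) :=
      Step.syncRS hch h1' h2'
    exact ⟨⟨.par C' c''.1 d''.1, hm''⟩,
      ⟨.par C' c'.1 d'.1, mem_reach_step hm'' hstepPar⟩, hr, .inl hstepPar,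
      ⟨a, b, c''.1, d''.1, ha, hb, c''.2, d''.2, rfl, rfl, hp1, hq1⟩,
      ⟨a', b', c'.1, d'.1, ha', hb', c'.2, d'.2, rfl, rfl, hp2, hq2⟩⟩

/-- termination condition for the product relation -/
lemma parRel_fin {C' : Set C} {p₁ q₁ p₂ q₂ : PExp C V B N}
    {Rp : (pLTS E p₁).State → (pLTS E p₂).State → Prop}
    {Rq : (pLTS E q₁).State → (pLTS E q₂).State → Prop}
    (hp : ∀ s₁ s₂, Rp s₁ s₂ → s₁ ∈ (pLTS E p₁).final →
      ∃ s₂', (pLTS E p₂).tauReach s₂ s₂' ∧ Rp s₁ s₂' ∧ s₂' ∈ (pLTS E p₂).final)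
    (hq : ∀ s₁ s₂, Rq s₁ s₂ → s₁ ∈ (pLTS E q₁).final →
      ∃ s₂', (pLTS E q₂).tauReach s₂ s₂' ∧ Rq s₁ s₂' ∧ s₂' ∈ (pLTS E q₂).final) :
    ∀ s₁ s₂, parRel E C' p₁ q₁ p₂ q₂ Rp Rq s₁ s₂ →
      s₁ ∈ (pLTS E (.par C' p₁ q₁)).final →
      ∃ s₂', (pLTS E (.par C' p₂ q₂)).tauReach s₂ s₂' ∧
        parRel E C' p₁ q₁ p₂ q₂ Rp Rq s₁ s₂' ∧
        s₂' ∈ (pLTS E (.par C' p₂ q₂)).final := by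
  rintro ⟨s1v, hs1m⟩ ⟨s2v, hs2m⟩ hR hfin
  obtain ⟨a, b, c, d, ha, hb, hc, hd, hs1, hs2, hRa, hRb⟩ := hR
  dsimp only at hs1 hs2 ⊢
  subst hs1; subst hs2
  obtain ⟨hta, htb⟩ := term_par_inv hfin
  obtain ⟨c', hre1, hp1, hf1⟩ := hp ⟨a, ha⟩ ⟨c, hc⟩ hRa hta
  obtain ⟨d', hre2, hq1, hf2⟩ := hq ⟨b, hb⟩ ⟨d, hd⟩ hRb htb
  obtain ⟨hm', hr⟩ := reach_lift hs2m
    ((tauChainL (C' := C') d (tauReach_down hre1)).trans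
      (tauChainR (C' := C') c'.1 (tauReach_down hre2)))
  exact ⟨⟨.par C' c'.1 d'.1, hm'⟩, hr,
    ⟨a, b, c'.1, d'.1, ha, hb, c'.2, d'.2, rfl, rfl, hp1, hq1⟩,
    Term.par hf1 hf2⟩

/-- divergence-preservation condition (first half) for the product relation -/
lemma parRel_div {C' : Set C} {p₁ q₁ p₂ q₂ : PExp C V B N}
    {Rp : (pLTS E p₁).State → (pLTS E p₂).State → Prop}
    {Rq : (pLTS E q₁).State → (pLTS E q₂).State → Prop}
    (hp : ∀ s₁ s₂ a s₁', Rp s₁ s₂ → (pLTS E p₁).tr s₁ a s₁' →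
      ∃ s₂'' s₂', (pLTS E p₂).tauReach s₂ s₂'' ∧ (pLTS E p₂).optStep s₂'' a s₂' ∧
        Rp s₁ s₂'' ∧ Rp s₁' s₂')
    (hq : ∀ s₁ s₂ a s₁', Rq s₁ s₂ → (pLTS E q₁).tr s₁ a s₁' →
      ∃ s₂'' s₂', (pLTS E q₂).tauReach s₂ s₂'' ∧ (pLTS E q₂).optStep s₂'' a s₂' ∧
        Rq s₁ s₂'' ∧ Rq s₁' s₂')
    (hpd : ∀ (s₂ : (pLTS E p₂).State) (f : ℕ → (pLTS E p₁).State),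
      (∀ i, (pLTS E p₁).tauStep (f i) (f (i + 1))) → (∀ i, Rp (f i) s₂) →
      ∃ s₂', Relation.TransGen (pLTS E p₂).tauStep s₂ s₂' ∧ ∃ i, Rp (f i) s₂')
    (hqd : ∀ (s₂ : (pLTS E q₂).State) (f : ℕ → (pLTS E q₁).State),
      (∀ i, (pLTS E q₁).tauStep (f i) (f (i + 1))) → (∀ i, Rq (f i) s₂) →
      ∃ s₂', Relation.TransGen (pLTS E q₂).tauStep s₂ s₂' ∧ ∃ i, Rq (f i) s₂') :
    ∀ (s₂ : (pLTS E (.par C' p₂ q₂)).State)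
      (f : ℕ → (pLTS E (.par C' p₁ q₁)).State),
      (∀ i, (pLTS E (.par C' p₁ q₁)).tauStep (f i) (f (i + 1))) →
      (∀ i, parRel E C' p₁ q₁ p₂ q₂ Rp Rq (f i) s₂) →
      ∃ s₂', Relation.TransGen (pLTS E (.par C' p₂ q₂)).tauStep s₂ s₂' ∧
        ∃ i, parRel E C' p₁ q₁ p₂ q₂ Rp Rq (f i) s₂' := by
  classical
  rintro ⟨s2v, hs2m⟩ f hstep hR
  obtain ⟨a0, b0, c, d, -, -, hc, hd, -, hs2, -, -⟩ := hR 0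
  dsimp only at hs2
  subst hs2
  have key : ∀ i, ∃ a b, ∃ (ha : a ∈ Reach E p₁) (hb : b ∈ Reach E q₁),
      (f i).1 = .par C' a b ∧ Rp ⟨a, ha⟩ ⟨c, hc⟩ ∧ Rq ⟨b, hb⟩ ⟨d, hd⟩ := by
    intro i
    obtain ⟨a, b, c', d', ha, hb, hc', hd', h1, h2, h3, h4⟩ := hR i
    dsimp only at h2
    obtain ⟨-, rfl, rfl⟩ : C' = C' ∧ c' = c ∧ d' = d := by
      injection h2.symm with e1 e2 e3; exact ⟨e1, e2, e3⟩
    exact ⟨a, b, ha, hb, h1, h3, h4⟩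
  choose A Bf hA hB hfeq hRA hRB using key
  have cases0 : ∀ i,
      (Step E (A i) none (A (i + 1)) ∧ Bf (i + 1) = Bf i) ∨
      (Step E (Bf i) none (Bf (i + 1)) ∧ A (i + 1) = A i) ∨
      (∃ ch ∈ C', ∃ v : V,
        (Step E (A i) (some (.send ch v)) (A (i + 1)) ∧
          Step E (Bf i) (some (.recv ch v)) (Bf (i + 1))) ∨
        (Step E (A i) (some (.recv ch v)) (A (i + 1)) ∧
          Step E (Bf i) (some (.send ch v)) (Bf (i + 1)))) := by
    intro i
    have h := hstep i
    have h' : Step E (f i).1 none (f (i + 1)).1 := h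
    rw [hfeq i, hfeq (i + 1)] at h'
    obtain ⟨a', b', he, hcase⟩ := step_par_inv h'
    obtain ⟨-, e2, e3⟩ : C' = C' ∧ a' = A (i + 1) ∧ b' = Bf (i + 1) := by
      injection he with e1 e2 e3; exact ⟨e1.symm, e2.symm, e3.symm⟩
    subst e2; subst e3
    rcases hcase with ⟨h1, h2, -⟩ | ⟨h1, h2, -⟩ | ⟨-, ch, hch, v, hsub⟩
    · exact .inl ⟨h1, h2⟩
    · exact .inr (.inl ⟨h1, h2⟩)
    · exact .inr (.inr ⟨ch, hch, v, hsub⟩)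
  by_cases hsync : ∃ i, ∃ ch ∈ C', ∃ v : V,
      (Step E (A i) (some (.send ch v)) (A (i + 1)) ∧
        Step E (Bf i) (some (.recv ch v)) (Bf (i + 1))) ∨
      (Step E (A i) (some (.recv ch v)) (A (i + 1)) ∧
        Step E (Bf i) (some (.send ch v)) (Bf (i + 1)))
  · -- a synchronisation occurs somewhere: use the simulation conditions
    obtain ⟨i, ch, hch, v, hcase⟩ := hsync
    rcases hcase with ⟨h1, h2⟩ | ⟨h1, h2⟩
    · obtain ⟨c'', c', hre1, hopt1, -, hp2⟩ :=
        hp ⟨A i, hA i⟩ ⟨c, hc⟩ (some (.send ch v)) ⟨A (i + 1), hA (i + 1)⟩ (hRA i) h1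
      obtain ⟨d'', d', hre2, hopt2, -, hq2⟩ :=
        hq ⟨Bf i, hB i⟩ ⟨d, hd⟩ (some (.recv ch v)) ⟨Bf (i + 1), hB (i + 1)⟩ (hRB i) h2
      rcases hopt1 with h1' | ⟨h, -⟩; swap; · exact absurd h (Option.some_ne_none _)
      rcases hopt2 with h2' | ⟨h, -⟩; swap; · exact absurd h (Option.some_ne_none _)
      obtain ⟨hm'', hr⟩ := reach_lift hs2m
        ((tauChainL (C' := C') d (tauReach_down hre1)).trans
          (tauChainR (C' := C') c''.1 (tauReach_down hre2)))
      have hstepPar : Step E (.par C' c''.1 d''.1) none (.par C' c'.1 d'.1) :=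
        Step.syncSR hch h1' h2'
      refine ⟨⟨.par C' c'.1 d'.1, mem_reach_step hm'' hstepPar⟩,
        Relation.TransGen.tail' hr hstepPar, i + 1,
        A (i + 1), Bf (i + 1), c'.1, d'.1, hA _, hB _, c'.2, d'.2,
        hfeq _, rfl, hp2, hq2⟩
    · obtain ⟨c'', c', hre1, hopt1, -, hp2⟩ :=
        hp ⟨A i, hA i⟩ ⟨c, hc⟩ (some (.recv ch v)) ⟨A (i + 1), hA (i + 1)⟩ (hRA i) h1
      obtain ⟨d'', d', hre2, hopt2, -, hq2⟩ :=
        hq ⟨Bf i, hB i⟩ ⟨d, hd⟩ (some (.send ch v)) ⟨Bf (i + 1), hB (i + 1)⟩ (hRB i) h2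
      rcases hopt1 with h1' | ⟨h, -⟩; swap; · exact absurd h (Option.some_ne_none _)
      rcases hopt2 with h2' | ⟨h, -⟩; swap; · exact absurd h (Option.some_ne_none _)
      obtain ⟨hm'', hr⟩ := reach_lift hs2m
        ((tauChainL (C' := C') d (tauReach_down hre1)).trans
          (tauChainR (C' := C') c''.1 (tauReach_down hre2)))
      have hstepPar : Step E (.par C' c''.1 d''.1) none (.par C' c'.1 d'.1) :=
        Step.syncRS hch h1' h2'
      refine ⟨⟨.par C' c'.1 d'.1, mem_reach_step hm'' hstepPar⟩,
        Relation.TransGen.tail' hr hstepPar, i + 1,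
        A (i + 1), Bf (i + 1), c'.1, d'.1, hA _, hB _, c'.2, d'.2,
        hfeq _, rfl, hp2, hq2⟩
  · -- no synchronisation ever occurs
    push_neg at hsync
    set L : ℕ → Prop := fun i => Step E (A i) none (A (i + 1)) ∧ Bf (i + 1) = Bf i
      with hLdef
    have LR : ∀ i, L i ∨ (Step E (Bf i) none (Bf (i + 1)) ∧ A (i + 1) = A i) := by
      intro i
      rcases cases0 i with h | h | ⟨ch, hch, v, hsub⟩
      · exact .inl h
      · exact .inr h
      · rcases hsub with ⟨h1, h2⟩ | ⟨h1, h2⟩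
        · exact absurd h2 ((hsync i ch hch v).1 h1)
        · exact absurd h2 ((hsync i ch hch v).2 h1)
    by_cases hinf : ∀ n, ∃ m, n ≤ m ∧ L m
    · -- infinitely many left τ-steps: left component diverges
      let idx : ℕ → ℕ := fun k =>
        Nat.rec (Nat.find (hinf 0)) (fun _ prev => Nat.find (hinf (prev + 1))) k
      have hL : ∀ k, L (idx k) := by
        intro k
        cases k with
        | zero => exact (Nat.find_spec (hinf 0)).2
        | succ k => exact (Nat.find_spec (hinf (idx k + 1))).2
      have hlt : ∀ k, idx k + 1 ≤ idx (k + 1) := fun k =>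
        (Nat.find_spec (hinf (idx k + 1))).1
      have hmin : ∀ k m, idx k + 1 ≤ m → m < idx (k + 1) → ¬ L m := by
        intro k m h1 h2 hLm
        exact Nat.find_min (hinf (idx k + 1)) h2 ⟨h1, hLm⟩
      have hconst : ∀ k j, idx k + 1 + j ≤ idx (k + 1) →
          A (idx k + 1 + j) = A (idx k + 1) := by
        intro k j
        induction j with
        | zero => intro _; rfl
        | succ j ih =>
          intro hj
          have hm : idx k + 1 + j < idx (k + 1) := by omega
          have hnotL : ¬ L (idx k + 1 + j) := hmin k _ (by omega) hm
          have hr : A (idx k + 1 + j + 1) = A (idx k + 1 + j) :=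
            ((LR _).resolve_left hnotL).2
          have : idx k + 1 + (j + 1) = idx k + 1 + j + 1 := by omega
          rw [this, hr, ih (by omega)]
      have hAconst : ∀ k, A (idx (k + 1)) = A (idx k + 1) := by
        intro k
        have h1 : idx k + 1 + (idx (k + 1) - (idx k + 1)) = idx (k + 1) := by
          have := hlt k; omega
        have := hconst k (idx (k + 1) - (idx k + 1)) (by omega)
        rwa [h1] at this
      have hstep' : ∀ k, (pLTS E p₁).tauStep ⟨A (idx k), hA (idx k)⟩
          ⟨A (idx (k + 1)), hA (idx (k + 1))⟩ := by
        intro k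
        have h1 : Step E (A (idx k)) none (A (idx k + 1)) := (hL k).1
        have h2 := hAconst k
        show Step E (A (idx k)) none (A (idx (k + 1)))
        rw [h2]; exact h1
      obtain ⟨c', htrans, k, hRk⟩ := hpd ⟨c, hc⟩
        (fun k => ⟨A (idx k), hA (idx k)⟩) hstep' (fun k => hRA (idx k))
      obtain ⟨hm', hr⟩ := reach_lift_trans hs2m
        (tauTransL (C' := C') d (tauTrans_down htrans))
      exact ⟨⟨.par C' c'.1 d, hm'⟩, hr, idx k,
        A (idx k), Bf (idx k), c'.1, d, hA _, hB _, c'.2, hd,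
        hfeq _, rfl, hRk, hRB (idx k)⟩
    · -- eventually only right τ-steps: right component diverges
      push_neg at hinf
      obtain ⟨n, hn⟩ := hinf
      have hRstep : ∀ j, Step E (Bf (n + j)) none (Bf (n + j + 1)) ∧
          A (n + j + 1) = A (n + j) :=
        fun j => (LR (n + j)).resolve_left (hn (n + j) (Nat.le_add_right n j))
      have hstep' : ∀ k, (pLTS E q₁).tauStep ⟨Bf (n + k), hB (n + k)⟩
          ⟨Bf (n + (k + 1)), hB (n + (k + 1))⟩ := by
        intro k
        show Step E (Bf (n + k)) none (Bf (n + (k + 1)))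
        have : n + (k + 1) = n + k + 1 := by omega
        rw [this]; exact (hRstep k).1
      obtain ⟨d', htrans, k, hRk⟩ := hqd ⟨d, hd⟩
        (fun k => ⟨Bf (n + k), hB (n + k)⟩) hstep' (fun k => hRB (n + k))
      obtain ⟨hm', hr⟩ := reach_lift_trans hs2m
        (tauTransR (C' := C') c (tauTrans_down htrans))
      exact ⟨⟨.par C' c d'.1, hm'⟩, hr, n + k,
        A (n + k), Bf (n + k), c, d'.1, hA _, hB _, hc, d'.2,
        hfeq _, rfl, hRA (n + k), hRk⟩

end ParCongruence

/-- Divergence-preserving branching bisimilarity is a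
congruence for the parallel composition operator of the process calculus. -/
theorem dpbbisim_congruence_parallel
    {C V B N : Type} (E : N → Option (PExp C V B N)) (hE : SpecWF E)
    (p₁ p₂ q₁ q₂ : PExp C V B N)
    (hp₁ : DefinedIn E p₁) (hp₂ : DefinedIn E p₂)
    (hq₁ : DefinedIn E q₁) (hq₂ : DefinedIn E q₂)
    (C' : Set C)
    (hp : DPBranchingBisimilar (pLTS E p₁) (pLTS E p₂))
    (hq : DPBranchingBisimilar (pLTS E q₁) (pLTS E q₂)) :
    DPBranchingBisimilar (pLTS E (.par C' p₁ q₁)) (pLTS E (.par C' p₂ q₂)) := by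
  obtain ⟨Rp, hbp, hdp, hip⟩ := hp
  obtain ⟨Rq, hbq, hdq, hiq⟩ := hq
  refine ⟨parRel E C' p₁ q₁ p₂ q₂ Rp Rq, ⟨?_, ?_, ?_, ?_⟩, ⟨?_, ?_⟩, ?_⟩
  · exact parRel_fwd hbp.fwd hbq.fwd
  · -- backward simulation, via the flipped relation
    intro s₁ s₂ a s₂' hR hstep
    obtain ⟨s₁'', s₁', h1, h2, h3, h4⟩ :=
      parRel_fwd (C' := C') (Rp := fun x y => Rp y x) (Rq := fun x y => Rq y x)
        (fun x y α x' h hs => hbp.bwd y x α x' h hs)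
        (fun x y α x' h hs => hbq.bwd y x α x' h hs)
        s₂ s₁ a s₂' (parRel_flip.mpr hR) hstep
    exact ⟨s₁'', s₁', h1, h2, parRel_flip.mp h3, parRel_flip.mp h4⟩
  · exact parRel_fin hbp.finFwd hbq.finFwd
  · intro s₁ s₂ hR hfin
    obtain ⟨s₁', h1, h2, h3⟩ :=
      parRel_fin (C' := C') (Rp := fun x y => Rp y x) (Rq := fun x y => Rq y x)
        (fun x y h hf => hbp.finBwd y x h hf)
        (fun x y h hf => hbq.finBwd y x h hf)
        s₂ s₁ (parRel_flip.mpr hR) hfin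
    exact ⟨s₁', h1, parRel_flip.mp h2, h3⟩
  · exact parRel_div hbp.fwd hbq.fwd hdp.1 hdq.1
  · intro s₁ f hstep hR
    obtain ⟨s₁', h1, i, h2⟩ :=
      parRel_div (C' := C') (Rp := fun x y => Rp y x) (Rq := fun x y => Rq y x)
        (fun x y α x' h hs => hbp.bwd y x α x' h hs)
        (fun x y α x' h hs => hbq.bwd y x α x' h hs)
        (fun t g hg hRg => hdp.2 t g hg hRg)
        (fun t g hg hRg => hdq.2 t g hg hRg)
        s₁ f hstep (fun i => parRel_flip.mpr (hR i))
    exact ⟨s₁', h1, i, parRel_flip.mp h2⟩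
  · exact ⟨p₁, q₁, p₂, q₂, .refl, .refl, .refl, .refl, rfl, rfl, hip, hiq⟩

end RTMPaper
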